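/- KL divergence is a Lyapunov function for reversible linear dynamics on a graph: let B = B⁺ − B⁻ ∈ {0,±1}^{n×r} be the incidence matrix of a finite graph (each column of B⁺ and of B⁻ has exactly one entry equal to 1, in distinct rows), let k⁺, k⁻ ∈ ℝ_{>0}^r, and define the linear flux j(x) := k⁺ ∘ (B⁺)ᵀx − k⁻ ∘ (B⁻)ᵀx. If x_st ∈ ℝ_{>0}^n is a steady state, i.e., B j(x_st) = 0, then along any differentiable solution x(t) ∈ ℝ_{>0}^n of ẋ = −B j(x), the generalized Kullback–Leibler divergence D[x(t)‖x_st] := Σ_i (x_i(t) ln(x_i(t)/x_{st,i}) − x_i(t) + x_{st,i}) is non-increasing in t. -/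

import Mathlib

open Matrix

private lemma KL_core {n : ℕ} (A : Matrix (Fin n) (Fin n) ℝ)
    (hoff : ∀ i j, i ≠ j → 0 ≤ A i j) (hcol : ∀ j, ∑ i, A i j = 0)
    (xst : Fin n → ℝ) (hxst : ∀ i, 0 < xst i)
    (hst : A *ᵥ xst = 0)
    (x : Fin n → ℝ) (hx : ∀ i, 0 < x i) :
    ∑ i, (A *ᵥ x) i * Real.log (x i / xst i) ≤ 0 := by
  set y : Fin n → ℝ := fun i => x i / xst i with hy
  have hy0 : ∀ i, 0 < y i := fun i => div_pos (hx i) (hxst i)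
  set W : Matrix (Fin n) (Fin n) ℝ := fun i j => A i j * xst j with hW
  have hWoff : ∀ i j, i ≠ j → 0 ≤ W i j := fun i j h => mul_nonneg (hoff i j h) (hxst j).le
  have hWcol : ∀ j, ∑ i, W i j = 0 := by
    intro j; rw [hW]; simp only [← Finset.sum_mul, hcol, zero_mul]
  have hWrow : ∀ i, ∑ j, W i j = 0 := by
    intro i
    have := congrFun hst i
    simpa [Matrix.mulVec, dotProduct, hW] using this
  have hAx : ∀ i, (A *ᵥ x) i = ∑ j, W i j * y j := by
    intro i
    simp only [Matrix.mulVec, dotProduct, hW, hy]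
    refine Finset.sum_congr rfl fun j _ => ?_
    rw [mul_assoc, mul_comm (xst j), div_mul_cancel₀ _ (hxst j).ne']
  calc ∑ i, (A *ᵥ x) i * Real.log (x i / xst i)
      = ∑ i, ∑ j, W i j * (y j * Real.log (y i)) := by
        refine Finset.sum_congr rfl fun i _ => ?_
        rw [hAx i, Finset.sum_mul]
        exact Finset.sum_congr rfl fun j _ => by rw [hy]; ring
    _ = ∑ i, ∑ j, W i j * (y j * (Real.log (y i) - Real.log (y j)))
        + ∑ i, ∑ j, W i j * (y j * Real.log (y j)) := by
        rw [← Finset.sum_add_distrib]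
        refine Finset.sum_congr rfl fun i _ => ?_
        rw [← Finset.sum_add_distrib]
        exact Finset.sum_congr rfl fun j _ => by ring
    _ = ∑ i, ∑ j, W i j * (y j * (Real.log (y i) - Real.log (y j))) := by
        have h0 : ∑ i, ∑ j, W i j * (y j * Real.log (y j)) = 0 := by
          rw [Finset.sum_comm]
          refine Finset.sum_eq_zero fun j _ => ?_
          rw [← Finset.sum_mul, hWcol, zero_mul]
        rw [h0, add_zero]
    _ ≤ ∑ i, ∑ j, W i j * (y i - y j) := by
        refine Finset.sum_le_sum fun i _ => Finset.sum_le_sum fun j _ => ?_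
        rcases eq_or_ne i j with h | h
        · subst h; exact le_of_eq (by ring)
        · refine mul_le_mul_of_nonneg_left ?_ (hWoff i j h)
          have hlog : Real.log (y i) - Real.log (y j) = Real.log (y i / y j) :=
            (Real.log_div (hy0 i).ne' (hy0 j).ne').symm
          rw [hlog]
          calc y j * Real.log (y i / y j) ≤ y j * (y i / y j - 1) :=
                mul_le_mul_of_nonneg_left
                  (Real.log_le_sub_one_of_pos (div_pos (hy0 i) (hy0 j))) (hy0 j).le
            _ = y i - y j := by
                  rw [mul_sub, mul_div_cancel₀ _ (hy0 j).ne', mul_one]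
    _ = 0 := by
        have h1 : ∀ i, ∑ j, W i j * (y i - y j) = - ∑ j, W i j * y j := by
          intro i
          have h2 : ∑ j, W i j * (y i - y j) = (∑ j, W i j) * y i - ∑ j, W i j * y j := by
            rw [Finset.sum_mul, ← Finset.sum_sub_distrib]
            exact Finset.sum_congr rfl fun j _ => by ring
          rw [h2, hWrow, zero_mul, zero_sub]
        calc ∑ i, ∑ j, W i j * (y i - y j) = ∑ i, -∑ j, W i j * y j :=
              Finset.sum_congr rfl fun i _ => h1 i
          _ = -∑ i, ∑ j, W i j * y j := Finset.sum_neg_distrib _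
          _ = -∑ j, ∑ i, W i j * y j := by rw [Finset.sum_comm]
          _ = -∑ j, (∑ i, W i j) * y j := by simp [Finset.sum_mul]
          _ = 0 := by simp [hWcol]

private lemma KL_term_deriv {g : ℝ → ℝ} {g' t c : ℝ} (hg : HasDerivAt g g' t)
    (hgpos : ∀ s, 0 < g s) (hc : 0 < c) :
    HasDerivAt (fun s => g s * Real.log (g s / c) - g s + c)
      (g' * Real.log (g t / c)) t := by
  have h1 : HasDerivAt (fun s => Real.log (g s)) (g' / g t) t := hg.log (hgpos t).ne'
  have h2 : HasDerivAt (fun s => g s * (Real.log (g s) - Real.log c) - g s + c)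
      (g' * (Real.log (g t) - Real.log c) + g t * (g' / g t) - g') t :=
    ((hg.mul (h1.sub_const (Real.log c))).sub hg).add_const c
  have hfun : (fun s => g s * Real.log (g s / c) - g s + c)
      = (fun s => g s * (Real.log (g s) - Real.log c) - g s + c) :=
    funext fun s => by rw [Real.log_div (hgpos s).ne' hc.ne']
  rw [hfun, Real.log_div (hgpos t).ne' hc.ne']
  convert h2 using 1
  rw [mul_div_cancel₀ _ (hgpos t).ne']
  ring

/-- KL divergence is a Lyapunov function for reversible linear dynamics on a
graph: if x_st > 0 is a steady state of ẋ = −B j(x) with linear flux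
j(x) = k⁺ ∘ (B⁺)ᵀx − k⁻ ∘ (B⁻)ᵀx, then t ↦ D[x(t)‖x_st] is non-increasing along any
positive solution. -/
theorem KL_lyapunov_for_reversible_linear_dynamics
    {n r : ℕ}
    (Bp Bm : Matrix (Fin n) (Fin r) ℝ)
    (hBp01 : ∀ i e, Bp i e = 0 ∨ Bp i e = 1)
    (hBm01 : ∀ i e, Bm i e = 0 ∨ Bm i e = 1)
    (hBpcol : ∀ e, ∃! i, Bp i e = 1)
    (hBmcol : ∀ e, ∃! i, Bm i e = 1)
    (hdistinct : ∀ e i, ¬(Bp i e = 1 ∧ Bm i e = 1))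
    (kp km : Fin r → ℝ) (hkp : ∀ e, 0 < kp e) (hkm : ∀ e, 0 < km e)
    (xst : Fin n → ℝ) (hxst : ∀ i, 0 < xst i)
    (hsteady : (Bp - Bm) *ᵥ
      (fun e => kp e * (Bpᵀ *ᵥ xst) e - km e * (Bmᵀ *ᵥ xst) e) = 0)
    (x : ℝ → Fin n → ℝ)
    (hpos : ∀ t : ℝ, ∀ i, 0 < x t i)
    (hflow : ∀ t : ℝ,
      HasDerivAt x
        (-((Bp - Bm) *ᵥ
          fun e => kp e * (Bpᵀ *ᵥ x t) e - km e * (Bmᵀ *ᵥ x t) e)) t) :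
    Antitone (fun t => ∑ i, (x t i * Real.log (x t i / xst i) - x t i + xst i)) := by
  -- nonnegativity of entries
  have hBpnn : ∀ i e, 0 ≤ Bp i e := fun i e => by rcases hBp01 i e with h | h <;> rw [h] <;> norm_num
  have hBmnn : ∀ i e, 0 ≤ Bm i e := fun i e => by rcases hBm01 i e with h | h <;> rw [h] <;> norm_num
  -- the rate matrix
  set A : Matrix (Fin n) (Fin n) ℝ :=
    fun i j => -∑ e, (Bp i e - Bm i e) * (kp e * Bp j e - km e * Bm j e) with hA
  -- A *ᵥ v = -(B *ᵥ j(v))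
  have hAmul : ∀ v : Fin n → ℝ, A *ᵥ v
      = -((Bp - Bm) *ᵥ fun e => kp e * (Bpᵀ *ᵥ v) e - km e * (Bmᵀ *ᵥ v) e) := by
    intro v
    funext i
    show ∑ j, A i j * v j
        = -∑ e, (Bp i e - Bm i e) * (kp e * (∑ j, Bp j e * v j) - km e * (∑ j, Bm j e * v j))
    calc ∑ j, A i j * v j
        = ∑ j, ∑ e, -((Bp i e - Bm i e) * (kp e * Bp j e - km e * Bm j e) * v j) := by
          refine Finset.sum_congr rfl fun j _ => ?_
          simp only [hA]
          rw [neg_mul, Finset.sum_mul, ← Finset.sum_neg_distrib]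
      _ = ∑ e, ∑ j, -((Bp i e - Bm i e) * (kp e * Bp j e - km e * Bm j e) * v j) :=
          Finset.sum_comm
      _ = -∑ e, (Bp i e - Bm i e) * (kp e * (∑ j, Bp j e * v j) - km e * (∑ j, Bm j e * v j)) := by
          rw [← Finset.sum_neg_distrib]
          refine Finset.sum_congr rfl fun e _ => ?_
          rw [Finset.sum_neg_distrib, neg_inj]
          rw [Finset.mul_sum, Finset.mul_sum, ← Finset.sum_sub_distrib, Finset.mul_sum]
          exact Finset.sum_congr rfl fun j _ => by ring
  -- column sums of Bp, Bm equal 1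
  have hsum : ∀ (C : Matrix (Fin n) (Fin r) ℝ), (∀ i e, C i e = 0 ∨ C i e = 1) →
      (∀ e, ∃! i, C i e = 1) → ∀ e, ∑ i, C i e = 1 := by
    intro C h01 hcolC e
    obtain ⟨i0, hi0, hu⟩ := hcolC e
    rw [Finset.sum_eq_single i0]
    · exact hi0
    · intro b _ hb
      rcases h01 b e with h | h
      · exact h
      · exact absurd (hu b h) hb
    · intro h; exact absurd (Finset.mem_univ i0) h
  -- off-diagonal nonnegativity
  have hoff : ∀ i j, i ≠ j → 0 ≤ A i j := by
    intro i j hij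
    simp only [hA]
    rw [← Finset.sum_neg_distrib]
    refine Finset.sum_nonneg fun e _ => ?_
    have hpp : Bp i e * Bp j e = 0 := by
      rcases hBp01 i e with h | h
      · rw [h, zero_mul]
      · rcases hBp01 j e with h' | h'
        · rw [h', mul_zero]
        · obtain ⟨i0, _, hu⟩ := hBpcol e
          exact absurd ((hu i h).trans (hu j h').symm) hij
    have hmm : Bm i e * Bm j e = 0 := by
      rcases hBm01 i e with h | h
      · rw [h, zero_mul]
      · rcases hBm01 j e with h' | h'
        · rw [h', mul_zero]
        · obtain ⟨i0, _, hu⟩ := hBmcol e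
          exact absurd ((hu i h).trans (hu j h').symm) hij
    have hexp : -((Bp i e - Bm i e) * (kp e * Bp j e - km e * Bm j e))
        = kp e * (Bm i e * Bp j e) + km e * (Bp i e * Bm j e)
          - kp e * (Bp i e * Bp j e) - km e * (Bm i e * Bm j e) := by ring
    rw [hexp, hpp, hmm, mul_zero, mul_zero, sub_zero, sub_zero]
    have h1 := mul_nonneg (hkp e).le (mul_nonneg (hBmnn i e) (hBpnn j e))
    have h2 := mul_nonneg (hkm e).le (mul_nonneg (hBpnn i e) (hBmnn j e))
    linarith
  -- column sums of A vanish
  have hcol : ∀ j, ∑ i, A i j = 0 := by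
    intro j
    simp only [hA]
    rw [Finset.sum_neg_distrib, Finset.sum_comm, neg_eq_zero]
    refine Finset.sum_eq_zero fun e _ => ?_
    rw [← Finset.sum_mul, Finset.sum_sub_distrib, hsum Bp hBp01 hBpcol e,
      hsum Bm hBm01 hBmcol e, sub_self, zero_mul]
  -- steady state for A
  have hst : A *ᵥ xst = 0 := by rw [hAmul xst, hsteady, neg_zero]
  -- derivative of x i
  have hxi : ∀ t i, HasDerivAt (fun s => x s i) ((A *ᵥ x t) i) t := by
    intro t i
    have h := hflow t
    rw [← hAmul (x t)] at h
    exact hasDerivAt_pi.mp h i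
  -- derivative of the KL divergence
  have hD : ∀ t, HasDerivAt (fun s => ∑ i, (x s i * Real.log (x s i / xst i) - x s i + xst i))
      (∑ i, (A *ᵥ x t) i * Real.log (x t i / xst i)) t := by
    intro t
    exact HasDerivAt.fun_sum fun i _ =>
      KL_term_deriv (hxi t i) (fun s => hpos s i) (hxst i)
  exact antitone_of_deriv_nonpos (fun t => (hD t).differentiableAt)
    (fun t => by
      rw [(hD t).deriv]
      exact KL_core A hoff hcol xst hxst hst (x t) (hpos t))
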